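/- Let a, b, φ, θ be real numbers with ab ≠ 0 and sin((φ−θ)/2) ≠ 0; set Δ = φ − θ, m_k = a·e^{ikφ} + b·e^{ikθ}, M_k = |m_k|, and D = M_0² − 4(M_1² − M_0²)²/(M_2² + 3M_0² − 4M_1²). Then D = (a − b)². Moreover, if in addition a ≥ b and a + b ≥ 0, then a = (M_0 + √D)/2 and b = (M_0 − √D)/2. -/

import Mathlib

/-- Amplitude recovery: with `m_k = a·e^{ikφ} + b·e^{ikθ}`, `M_k = |m_k|`,
`ab ≠ 0`, `sin((φ−θ)/2) ≠ 0` and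
`D = M₀² − 4(M₁² − M₀²)²/(M₂² + 3M₀² − 4M₁²)`, one has `D = (a − b)²`; and if moreover
`a ≥ b` and `a + b ≥ 0`, then `a = (M₀ + √D)/2` and `b = (M₀ − √D)/2`. -/
theorem amplitude_recovery
    (a b φ θ : ℝ) (hab : a * b ≠ 0) (hs : Real.sin ((φ - θ) / 2) ≠ 0)
    (M : ℕ → ℝ)
    (hM : ∀ k : ℕ, M k = ‖(a : ℂ) * Complex.exp (Complex.I * k * φ) +
        (b : ℂ) * Complex.exp (Complex.I * k * θ)‖)
    (D : ℝ)
    (hD : D = M 0 ^ 2 - 4 * (M 1 ^ 2 - M 0 ^ 2) ^ 2 / (M 2 ^ 2 + 3 * M 0 ^ 2 - 4 * M 1 ^ 2)) :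
    D = (a - b) ^ 2 ∧
    (a ≥ b → a + b ≥ 0 → a = (M 0 + Real.sqrt D) / 2 ∧ b = (M 0 - Real.sqrt D) / 2) := by
  have key : ∀ k : ℕ, M k ^ 2 =
      a ^ 2 + b ^ 2 + 2 * a * b * Real.cos (k * φ - k * θ) := by
    intro k
    rw [hM k, Complex.sq_norm]
    have h1 : (Complex.I * (k : ℂ) * (φ : ℂ)) = ((k * φ : ℝ) : ℂ) * Complex.I := by
      push_cast; ring
    have h2 : (Complex.I * (k : ℂ) * (θ : ℂ)) = ((k * θ : ℝ) : ℂ) * Complex.I := by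
      push_cast; ring
    rw [h1, h2, Complex.exp_mul_I, Complex.exp_mul_I]
    simp only [Complex.normSq_apply, Complex.add_re, Complex.add_im, Complex.mul_re,
      Complex.mul_im, Complex.I_re, Complex.I_im, Complex.ofReal_re, Complex.ofReal_im,
      Complex.cos_ofReal_re, Complex.cos_ofReal_im, Complex.sin_ofReal_re,
      Complex.sin_ofReal_im]
    have hc := Real.cos_sub ((k : ℝ) * φ) ((k : ℝ) * θ)
    have hp := Real.sin_sq_add_cos_sq ((k : ℝ) * φ)
    have hq := Real.sin_sq_add_cos_sq ((k : ℝ) * θ)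
    linear_combination a ^ 2 * hp + b ^ 2 * hq - 2 * a * b * hc
  set c := Real.cos (φ - θ) with hc
  have hM0 : M 0 ^ 2 = (a + b) ^ 2 := by
    have := key 0; simp at this; linarith [this]
  have hM1 : M 1 ^ 2 = a ^ 2 + b ^ 2 + 2 * a * b * c := by
    have := key 1; simpa using this
  have hM2 : M 2 ^ 2 = a ^ 2 + b ^ 2 + 2 * a * b * (2 * c ^ 2 - 1) := by
    have := key 2
    have h2 : ((2 : ℕ) : ℝ) * φ - ((2 : ℕ) : ℝ) * θ = 2 * (φ - θ) := by push_cast; ring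
    rw [h2, Real.cos_two_mul] at this
    linarith [this]
  have hc1 : c ≠ 1 := by
    intro h
    have hx : 0 < Real.sin ((φ - θ) / 2) ^ 2 := by positivity
    have h2 : Real.cos (2 * ((φ - θ) / 2)) = 2 * Real.cos ((φ - θ) / 2) ^ 2 - 1 :=
      Real.cos_two_mul _
    rw [show 2 * ((φ - θ) / 2) = φ - θ by ring] at h2
    have hp := Real.sin_sq_add_cos_sq ((φ - θ) / 2)
    rw [← hc, h] at h2
    nlinarith
  have hden : M 2 ^ 2 + 3 * M 0 ^ 2 - 4 * M 1 ^ 2 = 4 * a * b * (c - 1) ^ 2 := by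
    rw [hM0, hM1, hM2]; ring
  have hnum : M 1 ^ 2 - M 0 ^ 2 = 2 * a * b * (c - 1) := by
    rw [hM0, hM1]; ring
  have hdne : 4 * a * b * (c - 1) ^ 2 ≠ 0 := by
    have h1 : c - 1 ≠ 0 := sub_ne_zero.mpr hc1
    have : (4 : ℝ) * a * b = 4 * (a * b) := by ring
    rw [this]
    exact mul_ne_zero (mul_ne_zero four_ne_zero hab) (pow_ne_zero 2 h1)
  have hDval : D = (a - b) ^ 2 := by
    rw [hD, hnum, hden, hM0]
    field_simp
    ring
  refine ⟨hDval, fun hab' hsum => ?_⟩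
  have hM0v : M 0 = a + b := by
    have hnn : 0 ≤ M 0 := by rw [hM 0]; positivity
    nlinarith [hM0]
  have hsq : Real.sqrt D = a - b := by
    rw [hDval, Real.sqrt_sq (by linarith)]
  rw [hM0v, hsq]
  constructor <;> ring
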